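/- If g and h are 3-special polynomials in Z[t], then their product g·h is also 3-special. -/

import Mathlib

open Polynomial

/-- The sum of coefficients of `g` over exponents `≡ i (mod 3)`. -/
noncomputable def Rcoef (i : ℕ) (g : Polynomial ℤ) : ℤ :=
  ∑ h ∈ g.support.filter (fun h => h % 3 = i), g.coeff h

/-- `(a,b,c)` is special if `a = b = c` or `|a-b|+|a-c|+|b-c| = 2`. -/
def Special (a b c : ℤ) : Prop :=
  (a = b ∧ b = c) ∨ |a - b| + |a - c| + |b - c| = 2

/-- `g` is 3-special if its residue-class coefficient sums form a special triple. -/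
def IsThreeSpecial (g : Polynomial ℤ) : Prop :=
  Special (Rcoef 0 g) (Rcoef 1 g) (Rcoef 2 g)

/-! ### Auxiliary machinery -/

/-- The reduction ring hom `ℤ[t] → ℤ[ZMod 3]` collapsing exponents mod 3. -/
noncomputable def phi3 : Polynomial ℤ →+* AddMonoidAlgebra ℤ (ZMod 3) :=
  (AddMonoidAlgebra.mapDomainRingHom ℤ (Nat.castAddMonoidHom (ZMod 3))).comp
    (Polynomial.toFinsuppIso ℤ).toRingHom

lemma rcoef_eq (g : Polynomial ℤ) (i : ℕ) (hi : i < 3) : Rcoef i g = (phi3 g).coeff (i : ZMod 3) := by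
  have h1 : (phi3 g).coeff = Finsupp.mapDomain (Nat.cast : ℕ → ZMod 3) g.toFinsupp.coeff := rfl
  rw [h1, Finsupp.mapDomain, Finsupp.sum_apply, Finsupp.sum]
  simp only [Finsupp.single_apply]
  rw [Rcoef, Finset.sum_filter]
  apply Finset.sum_congr rfl
  intro x _
  have hiff : ((x : ZMod 3) = (i : ZMod 3)) ↔ x % 3 = i % 3 := by
    rw [ZMod.natCast_eq_natCast_iff]
    unfold Nat.ModEq
    omega
  have : (x % 3 = i) ↔ ((x : ZMod 3) = (i : ZMod 3)) := by
    rw [hiff]; omega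
  -- uses hi
  by_cases hx : x % 3 = i <;> simp [hx, ← this] <;> rfl

abbrev A3 := AddMonoidAlgebra ℤ (ZMod 3)

lemma a3_add_apply (f g : A3) (i : ZMod 3) : (f + g).coeff i = f.coeff i + g.coeff i := rfl
lemma a3_single_apply (a : ZMod 3) (x : ℤ) (i : ZMod 3) :
    (AddMonoidAlgebra.single a x).coeff i = if a = i then x else 0 := Finsupp.single_apply

lemma decomp3 (f : A3) :
    f = AddMonoidAlgebra.single 0 (f.coeff 0) + AddMonoidAlgebra.single 1 (f.coeff 1)
      + AddMonoidAlgebra.single 2 (f.coeff 2) := by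
  ext i
  simp only [a3_add_apply, a3_single_apply]
  fin_cases i <;> simp [ZMod] <;> rfl

lemma mul_apply3_0 (f g : A3) :
    (f * g).coeff 0 = f.coeff 0 * g.coeff 0 + f.coeff 1 * g.coeff 2 + f.coeff 2 * g.coeff 1 := by
  conv_lhs => rw [decomp3 f, decomp3 g]
  simp only [add_mul, mul_add, AddMonoidAlgebra.single_mul_single, a3_add_apply, a3_single_apply]
  simp +decide
  ring

lemma mul_apply3_1 (f g : A3) :
    (f * g).coeff 1 = f.coeff 0 * g.coeff 1 + f.coeff 1 * g.coeff 0 + f.coeff 2 * g.coeff 2 := by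
  conv_lhs => rw [decomp3 f, decomp3 g]
  simp only [add_mul, mul_add, AddMonoidAlgebra.single_mul_single, a3_add_apply, a3_single_apply]
  simp +decide
  ring

lemma mul_apply3_2 (f g : A3) :
    (f * g).coeff 2 = f.coeff 0 * g.coeff 2 + f.coeff 1 * g.coeff 1 + f.coeff 2 * g.coeff 0 := by
  conv_lhs => rw [decomp3 f, decomp3 g]
  simp only [add_mul, mul_add, AddMonoidAlgebra.single_mul_single, a3_add_apply, a3_single_apply]
  simp +decide
  ring

lemma special_iff_norm (a b c : ℤ) :
    Special a b c ↔ (a-c)^2 - (a-c)*(b-c) + (b-c)^2 ≤ 1 := by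
  constructor
  · intro hs
    have hb : -1 ≤ a - c ∧ a - c ≤ 1 ∧ -1 ≤ b - c ∧ b - c ≤ 1 ∧ -1 ≤ a - b ∧ a - b ≤ 1 := by
      rcases hs with ⟨rfl, rfl⟩ | hs
      · omega
      · simp only [Int.abs_eq_natAbs] at hs; omega
    obtain ⟨h1, h2, h3, h4, h5, h6⟩ := hb
    have hp : a - c = -1 ∨ a - c = 0 ∨ a - c = 1 := by omega
    have hq : b - c = -1 ∨ b - c = 0 ∨ b - c = 1 := by omega
    rcases hp with hp | hp | hp <;> rcases hq with hq | hq | hq <;> rw [hp, hq] <;>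
      first | omega | norm_num
  · intro hN
    have h1 : -1 ≤ a - c := by nlinarith [sq_nonneg (2*(b-c)-(a-c)), sq_nonneg (a-c+1)]
    have h2 : a - c ≤ 1 := by nlinarith [sq_nonneg (2*(b-c)-(a-c)), sq_nonneg (a-c-1)]
    have h3 : -1 ≤ b - c := by nlinarith [sq_nonneg (2*(a-c)-(b-c)), sq_nonneg (b-c+1)]
    have h4 : b - c ≤ 1 := by nlinarith [sq_nonneg (2*(a-c)-(b-c)), sq_nonneg (b-c-1)]
    have h5 : -1 ≤ a - b := by nlinarith [sq_nonneg (a-c+(b-c)), sq_nonneg (a-b+1)]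
    have h6 : a - b ≤ 1 := by nlinarith [sq_nonneg (a-c+(b-c)), sq_nonneg (a-b-1)]
    unfold Special
    simp only [Int.abs_eq_natAbs]
    omega

lemma special_mul (a b c a' b' c' : ℤ) (h1 : Special a b c) (h2 : Special a' b' c') :
    Special (a*a' + b*c' + c*b') (a*b' + b*a' + c*c') (a*c' + b*b' + c*a') := by
  rw [special_iff_norm] at h1 h2 ⊢
  have key : ((a*a' + b*c' + c*b') - (a*c' + b*b' + c*a'))^2
      - ((a*a' + b*c' + c*b') - (a*c' + b*b' + c*a')) * ((a*b' + b*a' + c*c') - (a*c' + b*b' + c*a'))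
      + ((a*b' + b*a' + c*c') - (a*c' + b*b' + c*a'))^2
      = ((a-c)^2 - (a-c)*(b-c) + (b-c)^2) * ((a'-c')^2 - (a'-c')*(b'-c') + (b'-c')^2) := by
    ring
  rw [key]
  have n1 : 0 ≤ (a-c)^2 - (a-c)*(b-c) + (b-c)^2 := by
    nlinarith [sq_nonneg (2*(a-c)-(b-c)), sq_nonneg (b-c)]
  have n2 : 0 ≤ (a'-c')^2 - (a'-c')*(b'-c') + (b'-c')^2 := by
    nlinarith [sq_nonneg (2*(a'-c')-(b'-c')), sq_nonneg (b'-c')]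
  nlinarith [mul_nonneg n1 (by linarith : (0:ℤ) ≤ 1 - ((a'-c')^2 - (a'-c')*(b'-c') + (b'-c')^2))]

theorem mul_threeSpecial (g h : Polynomial ℤ)
    (hg : IsThreeSpecial g) (hh : IsThreeSpecial h) : IsThreeSpecial (g * h) := by
  unfold IsThreeSpecial at *
  have e0 : ((0 : ℕ) : ZMod 3) = 0 := by norm_num
  have e1 : ((1 : ℕ) : ZMod 3) = 1 := by norm_num
  have e2 : ((2 : ℕ) : ZMod 3) = 2 := by norm_num
  rw [rcoef_eq _ _ (by norm_num), rcoef_eq _ _ (by norm_num), rcoef_eq _ _ (by norm_num), e0, e1, e2, map_mul,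
    mul_apply3_0, mul_apply3_1, mul_apply3_2]
  rw [rcoef_eq _ _ (by norm_num), rcoef_eq _ _ (by norm_num), rcoef_eq _ _ (by norm_num), e0, e1, e2] at hg hh
  exact special_mul _ _ _ _ _ _ hg hh
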